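/- Let X and Y be real Fréchet spaces and T : X → Y a surjective continuous linear map whose kernel is one-dimensional. If A ⊆ X is a closed polyhedron, then T(A) is a closed polyhedron in Y. -/

import Mathlib

open Filter Set Topology Pointwise Uniformity

/-- In a topological additive group, the closure of any set `S` is contained in `S + V`
for every neighborhood `V` of `0`. -/
lemma closure_subset_add_nhds' {G : Type*} [AddCommGroup G] [TopologicalSpace G]
    [IsTopologicalAddGroup G] (S V : Set G) (hV : V ∈ 𝓝 (0:G)) :
    closure S ⊆ S + V := by
  intro z hz
  have h1 : {w : G | z - w ∈ V} ∈ 𝓝 z := by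
    have hc : ContinuousAt (fun w => z - w) z := (continuous_const.sub continuous_id).continuousAt
    exact hc.preimage_mem_nhds (by simpa using hV)
  rcases mem_closure_iff_nhds.1 hz _ h1 with ⟨w, hw1, hw2⟩
  have hzz : z = w + (z - w) := by abel
  rw [hzz]
  exact Set.add_mem_add hw2 hw1

section OMT

variable {X Y : Type*}
    [AddCommGroup X] [Module ℝ X] [UniformSpace X] [IsUniformAddGroup X]
    [ContinuousSMul ℝ X] [CompleteSpace X] [TopologicalSpace.MetrizableSpace X]
    [AddCommGroup Y] [Module ℝ Y] [UniformSpace Y] [IsUniformAddGroup Y]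
    [ContinuousSMul ℝ Y] [CompleteSpace Y] [TopologicalSpace.MetrizableSpace Y]
    (T : X →L[ℝ] Y)

lemma dense_image_nhds (hT : Function.Surjective T) (V : Set X) (hV : V ∈ 𝓝 (0:X)) :
    closure (T '' V) ∈ 𝓝 (0:Y) := by
  haveI : (𝓤 Y).IsCountablyGenerated := IsUniformAddGroup.uniformity_countably_generated
  have step1 : ∀ V' : Set X, V' ∈ 𝓝 (0:X) → (interior (closure (T '' V'))).Nonempty := by
    intro V' hV'
    set C := closure (T '' V') with hCdef
    have hC : IsClosed C := isClosed_closure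
    set F : ℕ → Set Y := fun n => (fun y : Y => ((n:ℝ)+1)⁻¹ • y) ⁻¹' C with hF
    have hFclosed : ∀ n, IsClosed (F n) := fun n => hC.preimage (continuous_const_smul _)
    have hFcover : ⋃ n, F n = univ := by
      apply eq_univ_of_forall
      intro y
      obtain ⟨x, hx⟩ := hT y
      have h1 : Tendsto (fun n : ℕ => ((n:ℝ)+1)⁻¹) atTop (𝓝 0) := by
        simpa [one_div] using tendsto_one_div_add_atTop_nhds_zero_nat (𝕜 := ℝ)
      have htend : Tendsto (fun n : ℕ => ((n:ℝ)+1)⁻¹ • x) atTop (𝓝 0) := by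
        simpa using h1.smul_const x
      obtain ⟨n, hn⟩ := (htend.eventually_mem hV').exists
      refine mem_iUnion.2 ⟨n, ?_⟩
      have : ((n:ℝ)+1)⁻¹ • y = T (((n:ℝ)+1)⁻¹ • x) := by rw [map_smul, hx]
      show ((n:ℝ)+1)⁻¹ • y ∈ C
      rw [this]
      exact subset_closure ⟨_, hn, rfl⟩
    obtain ⟨n, z, hz⟩ := nonempty_interior_of_iUnion_of_closed hFclosed hFcover
    have hne : ((n:ℝ)+1)⁻¹ ≠ 0 := by positivity
    let h : Y ≃ₜ Y := Homeomorph.smulOfNeZero _ hne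
    have hFn : F n = h ⁻¹' C := rfl
    have : interior (F n) = h ⁻¹' (interior C) := by
      rw [hFn, h.preimage_interior]
    rw [this] at hz
    exact ⟨h z, hz⟩
  obtain ⟨V₀, hV₀, hhalf⟩ := exists_nhds_zero_half hV
  have hnegV₀ : (Neg.neg ⁻¹' V₀ : Set X) ∈ 𝓝 (0:X) := by
    have : ContinuousAt (Neg.neg : X → X) 0 := continuous_neg.continuousAt
    exact this.preimage_mem_nhds (by simpa using hV₀)
  set V₁ : Set X := V₀ ∩ (Neg.neg ⁻¹' V₀) with hV₁def
  have hV₁ : V₁ ∈ 𝓝 (0:X) := inter_mem hV₀ hnegV₀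
  obtain ⟨y₀, hy₀⟩ := step1 V₁ hV₁
  have hsub : ∀ a ∈ T '' V₁, ∀ b ∈ T '' V₁, a - b ∈ T '' V := by
    rintro _ ⟨u, hu, rfl⟩ _ ⟨w, hw, rfl⟩
    refine ⟨u - w, ?_, map_sub T u w⟩
    have : u + (-w) ∈ V := hhalf u hu.1 (-w) hw.2
    simpa [sub_eq_add_neg] using this
  rw [mem_nhds_iff]
  refine ⟨(fun y : Y => y + y₀) ⁻¹' (interior (closure (T '' V₁))), ?_, ?_, ?_⟩
  · intro y hy
    have h1 : y + y₀ ∈ closure (T '' V₁) := interior_subset hy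
    have h2 : y₀ ∈ closure (T '' V₁) := interior_subset hy₀
    have := map_mem_closure₂ continuous_sub h1 h2 hsub
    simpa using this
  · exact (continuous_id.add continuous_const).isOpen_preimage _ isOpen_interior
  · simpa using hy₀


set_option maxHeartbeats 1000000 in
lemma image_nhds (hT : Function.Surjective T) (W : Set X) (hW : W ∈ 𝓝 (0:X)) :
    T '' W ∈ 𝓝 (0:Y) := by
  obtain ⟨B, hB⟩ := (𝓝 (0:X)).exists_antitone_basis
  obtain ⟨M, hM⟩ := (𝓝 (0:Y)).exists_antitone_basis
  have hBmem : ∀ n, B n ∈ 𝓝 (0:X) := fun n => hB.1.mem_of_mem trivial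
  have hMmem : ∀ n, M n ∈ 𝓝 (0:Y) := fun n => hM.1.mem_of_mem trivial
  have key : ∀ p : {V : Set X // V ∈ 𝓝 (0:X)}, ∀ n : ℕ,
      ∃ q : {V : Set X // V ∈ 𝓝 (0:X)},
        (q.1 + q.1 ⊆ p.1) ∧ q.1 ⊆ B n ∧ q.1 ⊆ T ⁻¹' (M n) := by
    rintro ⟨V, hV⟩ n
    obtain ⟨V', hV', hhalf⟩ := exists_nhds_zero_half hV
    have h2 : T ⁻¹' (M n) ∈ 𝓝 (0:X) := by
      have := hMmem n
      exact T.continuous.continuousAt.preimage_mem_nhds (by simpa using this)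
    refine ⟨⟨V' ∩ (B n ∩ T ⁻¹' (M n)), inter_mem hV' (inter_mem (hBmem n) h2)⟩, ?_, ?_, ?_⟩
    · exact Set.add_subset_iff.2 fun a ha b hb => hhalf a ha.1 b hb.1
    · exact fun z hz => hz.2.1
    · exact fun z hz => hz.2.2
  choose next hnext1 hnext2 hnext3 using key
  let U : ℕ → {V : Set X // V ∈ 𝓝 (0:X)} :=
    fun n => Nat.rec (next ⟨W, hW⟩ 0) (fun n p => next p (n+1)) n
  have hUmem : ∀ n, (U n).1 ∈ 𝓝 (0:X) := fun n => (U n).2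
  have hU0mem : ∀ n, (0:X) ∈ (U n).1 := fun n => mem_of_mem_nhds (hUmem n)
  have hU0 : (U 0).1 + (U 0).1 ⊆ W := hnext1 _ 0
  have hUsucc : ∀ n, (U (n+1)).1 + (U (n+1)).1 ⊆ (U n).1 := fun n => hnext1 (U n) (n+1)
  have hUB : ∀ n, (U n).1 ⊆ B n := by
    intro n; cases n with
    | zero => exact hnext2 _ 0
    | succ m => exact hnext2 (U m) (m+1)
  have hUM : ∀ n, (U n).1 ⊆ T ⁻¹' (M n) := by
    intro n; cases n with
    | zero => exact hnext3 _ 0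
    | succ m => exact hnext3 (U m) (m+1)
  have hUanti : ∀ n, (U (n+1)).1 ⊆ (U n).1 := by
    intro n z hz
    have : z + 0 ∈ (U n).1 := hUsucc n (Set.add_mem_add hz (hU0mem (n+1)))
    simpa using this
  have hUle : ∀ m n : ℕ, m ≤ n → (U n).1 ⊆ (U m).1 := by
    intro m n h
    induction h with
    | refl => exact subset_rfl
    | step h ih => exact (hUanti _).trans ih
  -- partial sums of elements of the `U` sequence stay in a controlled set
  have sumlem : ∀ (xs : ℕ → X), (∀ i, xs i ∈ (U (i+1)).1) →
      ∀ n k, (∑ i ∈ Finset.range n, xs (k + i)) ∈ (U k).1 := by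
    intro xs hxs n
    induction n with
    | zero => intro k; simpa using hU0mem k
    | succ n ih =>
      intro k
      rw [Finset.sum_range_succ']
      have e1 : ∑ i ∈ Finset.range n, xs (k + (i+1)) = ∑ i ∈ Finset.range n, xs ((k+1) + i) :=
        Finset.sum_congr rfl fun i _ => by rw [show k + (i+1) = (k+1) + i from by omega]
      rw [e1, show k + 0 = k from rfl]
      exact hUsucc k (Set.add_mem_add (ih (k+1)) (hxs k))
  -- the iterative approximation step
  have step : ∀ n (z : Y), z ∈ closure (T '' (U (n+1)).1) →
      ∃ x : X, x ∈ (U (n+1)).1 ∧ z - T x ∈ closure (T '' (U (n+2)).1) := by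
    intro n z hz
    have hN : closure (T '' (U (n+2)).1) ∈ 𝓝 (0:Y) := dense_image_nhds T hT ((U (n+2)).1) ((U (n+2)).2)
    have hO : {w : Y | z - w ∈ interior (closure (T '' (U (n+2)).1))} ∈ 𝓝 z := by
      have hc : ContinuousAt (fun w : Y => z - w) z :=
        (continuous_const.sub continuous_id).continuousAt
      exact hc.preimage_mem_nhds (by simpa using interior_mem_nhds.2 hN)
    rcases mem_closure_iff_nhds.1 hz _ hO with ⟨w, hw1, hw2⟩
    obtain ⟨x, hx, rfl⟩ := hw2
    exact ⟨x, hx, interior_subset hw1⟩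
  have main : closure (T '' (U 1).1) ⊆ T '' W := by
    intro y hy
    choose xf hxf1 hxf2 using step
    let R : ∀ n : ℕ, {z : Y // z ∈ closure (T '' (U (n+1)).1)} :=
      fun n => Nat.rec ⟨y, hy⟩ (fun n p => ⟨p.1 - T (xf n p.1 p.2), hxf2 n p.1 p.2⟩) n
    let xs : ℕ → X := fun n => xf n (R n).1 (R n).2
    have hxs : ∀ n, xs n ∈ (U (n+1)).1 := fun n => hxf1 n (R n).1 (R n).2
    have hRrec : ∀ n, (R (n+1)).1 = (R n).1 - T (xs n) := fun n => rfl
    let s : ℕ → X := fun n => ∑ i ∈ Finset.range n, xs i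
    have hTs : ∀ n, T (s n) = y - (R n).1 := by
      intro n
      induction n with
      | zero =>
        show T (∑ i ∈ Finset.range 0, xs i) = y - y
        simp
      | succ n ih =>
        have : s (n+1) = s n + xs n := Finset.sum_range_succ _ _
        rw [this, map_add, ih, hRrec n]
        abel
    have hcauchy : CauchySeq s := by
      apply cauchySeq_of_controlled
        (fun n => {p : X × X | p.2 - p.1 ∈ (U n).1 ∨ p.1 - p.2 ∈ (U n).1})
      · intro ent hent
        rw [uniformity_eq_comap_nhds_zero X] at hent
        rcases hent with ⟨S, hS, hSsub⟩
        have hnegS : (Neg.neg ⁻¹' S : Set X) ∈ 𝓝 (0:X) :=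
          continuous_neg.continuousAt.preimage_mem_nhds (by simpa using hS)
        obtain ⟨n, -, hn⟩ := hB.1.mem_iff.1 (inter_mem hS hnegS)
        refine ⟨n, ?_⟩
        rintro ⟨p1, p2⟩ hp
        apply hSsub
        rcases hp with h | h
        · exact (hn (hUB n h)).1
        · have h3 : -(p1 - p2) ∈ S := (hn (hUB n h)).2
          show p2 - p1 ∈ S
          rwa [neg_sub] at h3
      · intro N m k hm hk
        rcases le_total m k with h | h
        · left
          have heq : s k - s m = ∑ i ∈ Finset.range (k - m), xs (m + i) := by
            rw [← Finset.sum_Ico_eq_sum_range, Finset.sum_Ico_eq_sub _ h]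
          rw [heq]
          exact hUle N m hm (sumlem xs hxs _ m)
        · right
          have heq : s m - s k = ∑ i ∈ Finset.range (m - k), xs (k + i) := by
            rw [← Finset.sum_Ico_eq_sum_range, Finset.sum_Ico_eq_sub _ h]
          rw [heq]
          exact hUle N k hk (sumlem xs hxs _ k)
    obtain ⟨x, hx⟩ := cauchySeq_tendsto_of_complete hcauchy
    have hxW : x ∈ W := by
      have hsU0 : ∀ n, s n ∈ (U 0).1 := by
        intro n
        have := sumlem xs hxs n 0
        simpa using this
      have hxcl : x ∈ closure (U 0).1 :=
        mem_closure_of_tendsto hx (Filter.Eventually.of_forall hsU0)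
      exact hU0 (closure_subset_add_nhds' _ _ (hUmem 0) hxcl)
    have hRlim : Tendsto (fun n => (R n).1) atTop (𝓝 (0:Y)) := by
      have hRM : ∀ n, (R n).1 ∈ closure (M (n+1)) := by
        intro n
        refine closure_mono ?_ (R n).2
        exact Set.image_subset_iff.2 (hUM (n+1))
      rw [Filter.tendsto_def]
      intro V hV
      obtain ⟨V', hV', hhalf⟩ := exists_nhds_zero_half hV
      obtain ⟨N, -, hN⟩ := hM.1.mem_iff.1 hV'
      rw [Filter.mem_atTop_sets]
      refine ⟨N, fun n hn => ?_⟩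
      have h1 : closure (M (n+1)) ⊆ M (n+1) + V' :=
        closure_subset_add_nhds' _ _ hV'
      have h2 : M (n+1) ⊆ V' := (hM.2 (by omega : N ≤ n+1)).trans hN
      rcases h1 (hRM n) with ⟨a, ha, b, hb, hab⟩
      show (R n).1 ∈ V
      rw [← hab]
      exact hhalf a (h2 ha) b hb
    have hTx : T x = y := by
      have h1 : Tendsto (fun n => T (s n)) atTop (𝓝 (T x)) :=
        (T.continuous.tendsto x).comp hx
      have h2 : Tendsto (fun n => T (s n)) atTop (𝓝 y) := by
        have : Tendsto (fun n => y - (R n).1) atTop (𝓝 (y - 0)) :=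
          tendsto_const_nhds.sub hRlim
        simp only [sub_zero] at this
        simpa only [hTs] using this
      exact tendsto_nhds_unique h1 h2
    exact ⟨x, hxW, hTx⟩
  exact mem_of_superset (dense_image_nhds T hT _ (hUmem 1)) main


lemma factor_functional (hT : Function.Surjective T) (g : X →L[ℝ] ℝ)
    (hg : ∀ x, T x = 0 → g x = 0) :
    ∃ h : Y →L[ℝ] ℝ, ∀ x, h (T x) = g x := by
  have hT' : Function.Surjective (T : X →ₗ[ℝ] Y) := hT
  have hle : LinearMap.ker (T : X →ₗ[ℝ] Y) ≤ LinearMap.ker (g : X →ₗ[ℝ] ℝ) := by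
    intro x hx
    rw [LinearMap.mem_ker] at hx ⊢
    exact hg x hx
  let e := LinearMap.quotKerEquivOfSurjective (T : X →ₗ[ℝ] Y) hT'
  let h0 : Y →ₗ[ℝ] ℝ :=
    ((LinearMap.ker (T : X →ₗ[ℝ] Y)).liftQ (g : X →ₗ[ℝ] ℝ) hle) ∘ₗ (e.symm : Y →ₗ[ℝ] _)
  have hh0 : ∀ x, h0 (T x) = g x := by
    intro x
    have he : e (Submodule.Quotient.mk x) = T x := rfl
    have hsymm : e.symm (T x) = Submodule.Quotient.mk x :=
      (LinearEquiv.symm_apply_eq e).2 he.symm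
    show ((LinearMap.ker (T : X →ₗ[ℝ] Y)).liftQ (g : X →ₗ[ℝ] ℝ) hle) (e.symm (T x)) = g x
    rw [hsymm]
    exact Submodule.liftQ_apply _ _ _
  have hcont : Continuous h0 := by
    apply continuous_of_continuousAt_zero h0
    have : Tendsto h0 (𝓝 0) (𝓝 (0:ℝ)) := by
      rw [Filter.tendsto_def]
      intro V hV
      have hU : (⇑g) ⁻¹' V ∈ 𝓝 (0:X) :=
        g.continuous.continuousAt.preimage_mem_nhds (by simpa using hV)
      refine mem_of_superset (image_nhds T hT _ hU) ?_
      rintro _ ⟨u, hu, rfl⟩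
      show h0 (T u) ∈ V
      rw [hh0 u]
      exact hu
    simpa [ContinuousAt, map_zero] using this
  exact ⟨⟨h0, hcont⟩, hh0⟩

end OMT

lemma core_real {n : ℕ} (φ lam a : Fin n → ℝ) :
    ((∀ k, a k = 0 → φ k ≤ lam k) ∧
      ∀ i j, 0 < a i → a j < 0 → a i * φ j - a j * φ i ≤ a i * lam j - a j * lam i)
    ↔ ∃ t : ℝ, ∀ k, φ k + t * a k ≤ lam k := by
  classical
  constructor
  · rintro ⟨h1, h2⟩
    set b : Fin n → ℝ := fun k => (lam k - φ k) / a k with hb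
    set s : Finset (Fin n) := Finset.univ.filter (fun j => a j < 0) with hs
    have hposle : ∀ k, 0 < a k → ∀ t : ℝ, t ≤ b k → φ k + t * a k ≤ lam k := by
      intro k hk t htb
      have := (le_div_iff₀ hk).1 htb
      linarith
    by_cases hne : s.Nonempty
    · refine ⟨s.sup' hne b, fun k => ?_⟩
      rcases lt_trichotomy (a k) 0 with hk | hk | hk
      · have hks : k ∈ s := by simp [hs, hk]
        have hbk : b k ≤ s.sup' hne b := Finset.le_sup' b hks
        rw [hb] at hbk
        rw [div_le_iff_of_neg hk] at hbk
        linarith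
      · have := h1 k hk
        rw [hk]
        simpa using this
      · refine hposle k hk _ ?_
        refine Finset.sup'_le hne b fun j hj => ?_
        have hj' : a j < 0 := by simpa [hs] using hj
        have h := h2 k j hk hj'
        have h' : (lam k - φ k) * a j ≤ (lam j - φ j) * a k := by nlinarith [h]
        show (lam j - φ j) / a j ≤ (lam k - φ k) / a k
        rw [le_div_iff₀ hk, div_mul_eq_mul_div, div_le_iff_of_neg hj']
        exact h'
    · have hnoneg : ∀ k, 0 ≤ a k := by
        intro k
        by_contra hc
        push_neg at hc
        exact hne ⟨k, by simp [hs, hc]⟩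
      set s' : Finset (Fin n) := Finset.univ.filter (fun k => 0 < a k) with hs'
      by_cases hne' : s'.Nonempty
      · refine ⟨s'.inf' hne' b, fun k => ?_⟩
        rcases eq_or_lt_of_le (hnoneg k) with hk | hk
        · have := h1 k hk.symm
          rw [← hk]
          simpa using this
        · exact hposle k hk _ (Finset.inf'_le b (by simp [hs', hk]))
      · refine ⟨0, fun k => ?_⟩
        have hk : a k = 0 := by
          refine le_antisymm ?_ (hnoneg k)
          by_contra hc
          push_neg at hc
          exact hne' ⟨k, by simp [hs', hc]⟩
        have := h1 k hk
        simpa using this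
  · rintro ⟨t, ht⟩
    constructor
    · intro k hk
      have := ht k
      rw [hk] at this
      simpa using this
    · intro i j hi hj
      nlinarith [mul_le_mul_of_nonneg_left (ht j) hi.le,
        mul_le_mul_of_nonneg_left (ht i) (neg_nonneg.2 hj.le)]


/-- A subset `P` of a real topological vector space `X` is a closed polyhedron if there
exist a positive integer `n`, continuous linear functionals `f₁,…,fₙ` on `X`, and reals
`λ₁,…,λₙ` such that `P = {x : fₖ x ≤ λₖ for all k}`. -/
def IsClosedPolyhedron {X : Type*} [AddCommGroup X] [Module ℝ X] [TopologicalSpace X]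
    (P : Set X) : Prop :=
  ∃ n : ℕ, 0 < n ∧ ∃ (f : Fin n → X →L[ℝ] ℝ) (lam : Fin n → ℝ),
    P = {x : X | ∀ k, f k x ≤ lam k}

/-- If `X`, `Y` are real Fréchet spaces and `T : X → Y` is a surjective continuous
linear map whose kernel is one-dimensional, then the image of a closed polyhedron
of `X` under `T` is a closed polyhedron of `Y`. -/
theorem image_closedPolyhedron_of_ker_one_dim
    {X Y : Type*}
    [AddCommGroup X] [Module ℝ X] [UniformSpace X] [IsUniformAddGroup X]
    [ContinuousSMul ℝ X] [CompleteSpace X] [TopologicalSpace.MetrizableSpace X]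
    [AddCommGroup Y] [Module ℝ Y] [UniformSpace Y] [IsUniformAddGroup Y]
    [ContinuousSMul ℝ Y] [CompleteSpace Y] [TopologicalSpace.MetrizableSpace Y]
    (T : X →L[ℝ] Y) (hT : Function.Surjective T)
    (hker : Module.rank ℝ (LinearMap.ker (T : X →ₗ[ℝ] Y)) = 1)
    (A : Set X) (hA : IsClosedPolyhedron A) :
    IsClosedPolyhedron (T '' A) := by
  classical
  obtain ⟨n, hn, f, lam, rfl⟩ := hA
  obtain ⟨v₀, hv₀ne, hv₀span⟩ := rank_eq_one_iff.1 hker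
  set e : X := (v₀ : X) with he
  have hTe : T e = 0 := v₀.2
  have hker' : ∀ x : X, T x = 0 → ∃ c : ℝ, x = c • e := by
    intro x hx
    obtain ⟨c, hc⟩ := hv₀span ⟨x, hx⟩
    exact ⟨c, (congrArg Subtype.val hc).symm⟩
  set a : Fin n → ℝ := fun k => f k e with ha
  set Gc : (Fin n × Fin n) ⊕ (Fin n) → (X →L[ℝ] ℝ) × ℝ := fun q =>
    match q with
    | Sum.inl (i, j) =>
        if 0 < a i ∧ a j < 0 then
          (a i • f j - a j • f i, a i * lam j - a j * lam i)
        else (0, 0)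
    | Sum.inr k => if a k = 0 then (f k, lam k) else (0, 0)
    with hGc
  have P1 : ∀ q, (Gc q).1 e = 0 := by
    rintro (⟨i, j⟩ | k)
    · show (if 0 < a i ∧ a j < 0 then
          (a i • f j - a j • f i, a i * lam j - a j * lam i)
        else ((0:X →L[ℝ] ℝ), (0:ℝ))).1 e = 0
      split_ifs with h
      · show (a i • f j - a j • f i) e = 0
        simp only [ContinuousLinearMap.sub_apply, ContinuousLinearMap.smul_apply, smul_eq_mul]
        show a i * a j - a j * a i = 0
        ring
      · simp
    · show (if a k = 0 then (f k, lam k) else ((0:X →L[ℝ] ℝ), (0:ℝ))).1 e = 0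
      split_ifs with h
      · exact h
      · simp
  have P2 : ∀ x : X, (∀ q, (Gc q).1 x ≤ (Gc q).2) ↔
      ((∀ k, a k = 0 → f k x ≤ lam k) ∧
        ∀ i j, 0 < a i → a j < 0 →
          a i * f j x - a j * f i x ≤ a i * lam j - a j * lam i) := by
    intro x
    constructor
    · intro h
      constructor
      · intro k hk
        have := h (Sum.inr k)
        simpa [hGc, hk] using this
      · intro i j hi hj
        have := h (Sum.inl (i, j))
        simp only [hGc, if_pos (And.intro hi hj)] at this
        simpa [ContinuousLinearMap.sub_apply, ContinuousLinearMap.smul_apply,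
          smul_eq_mul] using this
    · rintro ⟨h1, h2⟩ (⟨i, j⟩ | k)
      · simp only [hGc]
        split_ifs with h
        · simpa [ContinuousLinearMap.sub_apply, ContinuousLinearMap.smul_apply,
            smul_eq_mul] using h2 i j h.1 h.2
        · simp
      · simp only [hGc]
        split_ifs with h
        · exact h1 k h
        · simp
  have hfac : ∀ q, ∃ h : Y →L[ℝ] ℝ, ∀ x, h (T x) = (Gc q).1 x := by
    intro q
    apply factor_functional T hT
    intro x hx
    obtain ⟨c, rfl⟩ := hker' x hx
    rw [map_smul, P1 q, smul_zero]
  choose H hH using hfac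
  have P3 : ∀ x : X, (∀ q, (Gc q).1 x ≤ (Gc q).2) ↔
      ∃ t : ℝ, ∀ k, f k x + t * a k ≤ lam k :=
    fun x => (P2 x).trans (core_real (fun k => f k x) lam a)
  have hset : T '' {x : X | ∀ k, f k x ≤ lam k} = {y : Y | ∀ q, H q y ≤ (Gc q).2} := by
    ext y
    constructor
    · rintro ⟨x, hx, rfl⟩ q
      rw [hH q x]
      refine (P3 x).2 ⟨0, fun k => by simpa using hx k⟩ q
    · intro hy
      obtain ⟨x₀, rfl⟩ := hT y
      have hq : ∀ q, (Gc q).1 x₀ ≤ (Gc q).2 := fun q => by rw [← hH q x₀]; exact hy q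
      obtain ⟨t, ht⟩ := (P3 x₀).1 hq
      refine ⟨x₀ + t • e, fun k => ?_, by rw [map_add, map_smul, hTe, smul_zero, add_zero]⟩
      have heq : f k (x₀ + t • e) = f k x₀ + t * a k := by
        rw [map_add, map_smul, smul_eq_mul]
      rw [heq]
      exact ht k
  haveI : Nonempty ((Fin n × Fin n) ⊕ (Fin n)) := ⟨Sum.inr ⟨0, hn⟩⟩
  let eκ := Fintype.equivFin ((Fin n × Fin n) ⊕ (Fin n))
  refine ⟨Fintype.card ((Fin n × Fin n) ⊕ (Fin n)), Fintype.card_pos,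
    fun k => H (eκ.symm k), fun k => (Gc (eκ.symm k)).2, ?_⟩
  rw [hset]
  ext y
  simp only [Set.mem_setOf_eq]
  constructor
  · intro h k
    exact h (eκ.symm k)
  · intro h q
    have := h (eκ q)
    simpa using this
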